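/- arXiv:2007.09966 — 4 statements merged into one kernel-verified Lean document; each statement's English description precedes it below -/
import Mathlib

section
/- Let (M_k) be a martingale with M_0 = 0 whose differences M_k − M_{k−1} are centered Poisson increments Z_k − Λγ_k with Z_k | F_{k−1} ~ Poisson(Λγ_k) and γ_k ∈ [0,1] F_{k−1}-measurable. Then for any η > 0, P(M_n > η) ≤ exp( −η² / (2Λ Σ_{k=1}^n γ_k + 2 max{1,Λ} η) ). -/
open MeasureTheory ProbabilityTheory Real
open scoped ENNReal NNReal


lemma exp_taylor2 {t : ℝ} (ht : 0 ≤ t) (ht1 : t < 1) :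
    Real.exp t - 1 - t ≤ t^2 / (2*(1-t)) := by
  have h1 : HasSum (fun m : ℕ => t^m / m.factorial) (Real.exp t) := by
    rw [exp_eq_exp_ℝ]; exact NormedSpace.expSeries_div_hasSum_exp t
  have h2 := (hasSum_nat_add_iff' (f := fun m : ℕ => t^m / m.factorial) 2).mpr h1
  simp only [Finset.sum_range_succ, Finset.sum_range_zero] at h2
  norm_num at h2
  have h2' : HasSum (fun m : ℕ => t^(m+2) / (m+2).factorial) (Real.exp t - 1 - t) := by
    convert h2 using 1; rfl; ring
  have hg : HasSum (fun m : ℕ => t^m) (1-t)⁻¹ := hasSum_geometric_of_lt_one ht ht1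
  have h3 : HasSum (fun m : ℕ => t^(m+2) / 2) (t^2/(2*(1-t))) := by
    convert hg.mul_left (t^2/2) using 1
    · rfl
    · funext m; rw [pow_add]; ring
    · rw [div_mul_eq_mul_div, div_eq_div_iff (by nlinarith) (by nlinarith)]
      rw [mul_assoc]
      congr 1
      rw [mul_comm 2 (1-t), ← mul_assoc, inv_mul_cancel₀ (by linarith : (1:ℝ)-t ≠ 0), one_mul]
  refine hasSum_le (fun m => ?_) h2' h3
  exact div_le_div_of_nonneg_left (by positivity) two_pos
    (by exact_mod_cast Nat.le_of_dvd (Nat.factorial_pos _) (Nat.dvd_factorial (by omega) (by omega)))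

lemma poisson_mgf (r : NNReal) (t : ℝ) :
    ∑' m : ℕ, ENNReal.ofReal (Real.exp (t*m)) * poissonMeasure r {m}
      = ENNReal.ofReal (Real.exp (r*(Real.exp t - 1))) := by
  have h1 : HasSum (fun m : ℕ => ((r:ℝ) * Real.exp t)^m / m.factorial)
      (Real.exp ((r:ℝ) * Real.exp t)) := by
    rw [exp_eq_exp_ℝ]; exact NormedSpace.expSeries_div_hasSum_exp _
  have h2 := h1.mul_left (Real.exp (-(r:ℝ)))
  rw [← Real.exp_add] at h2
  have he : -(r:ℝ) + (r:ℝ) * Real.exp t = (r:ℝ)*(Real.exp t - 1) := by ring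
  rw [he] at h2
  have hsum : HasSum (fun m : ℕ => Real.exp (t*m) * poissonPMFReal r m)
      (Real.exp ((r:ℝ)*(Real.exp t - 1))) := by
    convert h2 using 1
    rfl
    funext m
    unfold poissonPMFReal
    rw [mul_pow, mul_comm t (m:ℝ), exp_nat_mul]
    ring
  have key : ∀ m : ℕ, ENNReal.ofReal (Real.exp (t*m)) * poissonMeasure r {m}
      = ENNReal.ofReal (Real.exp (t*m) * poissonPMFReal r m) := by
    intro m
    rw [poissonMeasure_singleton]
    show _ * ENNReal.ofReal (poissonPMFReal r m) = _
    rw [← ENNReal.ofReal_mul (exp_pos _).le]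
  simp_rw [key]
  rw [← ENNReal.ofReal_tsum_of_nonneg
    (fun m => mul_nonneg (exp_pos _).le poissonPMFReal_nonneg) hsum.summable, hsum.tsum_eq]

lemma pmfReal_le_one (r : NNReal) (m : ℕ) : poissonPMFReal r m ≤ 1 :=
  le_hasSum (poissonPMFRealSum r) m (fun _ _ => poissonPMFReal_nonneg)

lemma setLintegral_exp_eq {Ω : Type*} {mF : MeasurableSpace Ω} {mΩ : MeasurableSpace Ω}
    (hm : mF ≤ mΩ) (μ : Measure Ω) [IsProbabilityMeasure μ]
    {Z : Ω → ℕ} (hZ : Measurable[mΩ] Z) {g : Ω → ℝ} (hg : Measurable[mF] g)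
    (hg0 : ∀ ω, 0 ≤ g ω)
    (hcond : ∀ s : Set ℕ, MeasurableSet s → (μ⟦Z ⁻¹' s | mF⟧) =ᵐ[μ]
      fun ω => ((poissonMeasure (Real.toNNReal (g ω))) s).toReal)
    (t : ℝ) {A : Set Ω} (hA : MeasurableSet[mF] A) :
    ∫⁻ ω in A, ENNReal.ofReal (Real.exp (t * Z ω)) ∂μ
      = ∫⁻ ω in A, ENNReal.ofReal (Real.exp (g ω * (Real.exp t - 1))) ∂μ := by
  have hgm : Measurable[mΩ] g := hg.mono hm le_rfl
  set p : ℕ → Ω → ℝ := fun m ω => poissonPMFReal (Real.toNNReal (g ω)) m with hp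
  have hpval : ∀ (j : ℕ) ω, p j ω = Real.exp (-(g ω)) * g ω ^ j / j.factorial := by
    intro j ω
    show poissonPMFReal (Real.toNNReal (g ω)) j = _
    unfold poissonPMFReal
    rw [Real.coe_toNNReal _ (hg0 ω)]
  have hpmeas : ∀ j, Measurable[mΩ] (p j) := by
    intro j
    have : p j = fun ω => Real.exp (-(g ω)) * g ω ^ j / j.factorial := funext (hpval j)
    rw [this]
    exact ((hgm.neg.exp.mul (hgm.pow_const j)).div_const _)
  have hpq : ∀ (j : ℕ) ω, poissonMeasure (Real.toNNReal (g ω)) {j} = ENNReal.ofReal (p j ω) := by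
    intro j ω
    rw [poissonMeasure_singleton]
    rfl
  have hp0 : ∀ (j : ℕ) ω, 0 ≤ p j ω := fun j ω => poissonPMFReal_nonneg
  have hp1 : ∀ (j : ℕ) ω, p j ω ≤ 1 := fun j ω => pmfReal_le_one _ j
  have step1 : ∀ j : ℕ, μ (A ∩ Z ⁻¹' {j}) = ∫⁻ ω in A, ENNReal.ofReal (p j ω) ∂μ := by
    intro j
    have hZj : MeasurableSet[mΩ] (Z ⁻¹' {j}) := hZ (measurableSet_singleton j)
    have hint : Integrable ((Z ⁻¹' {j}).indicator (fun _ => (1:ℝ))) μ :=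
      (integrable_const (1:ℝ)).indicator hZj
    have h1 := setIntegral_condExp hm hint hA
    have h2 : ∫ ω in A, (μ⟦Z ⁻¹' {j} | mF⟧) ω ∂μ = ∫ ω in A, p j ω ∂μ := by
      refine setIntegral_congr_ae (hm A hA) ?_
      filter_upwards [hcond {j} (measurableSet_singleton j)] with ω hω _
      rw [hω, hpq, ENNReal.toReal_ofReal (hp0 j ω)]
    have h3 : ∫ ω in A, (Z ⁻¹' {j}).indicator (fun _ => (1:ℝ)) ω ∂μ
        = (μ (A ∩ Z ⁻¹' {j})).toReal := by
      rw [setIntegral_indicator hZj]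
      simp [measureReal_def]
    have hpint : Integrable (p j) μ := by
      refine (integrable_const (1:ℝ)).mono' (hpmeas j).aestronglyMeasurable ?_
      filter_upwards with ω
      rw [Real.norm_eq_abs, abs_of_nonneg (hp0 j ω)]
      exact hp1 j ω
    have h4 : ENNReal.ofReal (∫ ω in A, p j ω ∂μ) = ∫⁻ ω in A, ENNReal.ofReal (p j ω) ∂μ :=
      ofReal_integral_eq_lintegral_ofReal hpint.integrableOn
        (Filter.Eventually.of_forall fun ω => hp0 j ω)
    rw [← h4, ← h2, h1, h3, ENNReal.ofReal_toReal (measure_ne_top μ _)]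
  have lhs_expand : ∀ ω, ENNReal.ofReal (Real.exp (t * Z ω))
      = ∑' k : ℕ, (Z ⁻¹' {k}).indicator (fun _ => ENNReal.ofReal (Real.exp (t*k))) ω := by
    intro ω
    rw [tsum_eq_single (Z ω) ?_]
    · simp [Set.indicator_of_mem, Set.mem_preimage]
    · intro b hb
      apply Set.indicator_of_notMem
      simp [Ne.symm hb]
  have rhs_expand : ∀ ω, ENNReal.ofReal (Real.exp (g ω * (Real.exp t - 1)))
      = ∑' k : ℕ, ENNReal.ofReal (Real.exp (t*k)) * ENNReal.ofReal (p k ω) := by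
    intro ω
    have := poisson_mgf (Real.toNNReal (g ω)) t
    rw [Real.coe_toNNReal _ (hg0 ω)] at this
    simp_rw [hpq] at this
    exact this.symm
  calc ∫⁻ ω in A, ENNReal.ofReal (Real.exp (t * Z ω)) ∂μ
      = ∫⁻ ω in A, ∑' k : ℕ, (Z ⁻¹' {k}).indicator
          (fun _ => ENNReal.ofReal (Real.exp (t*k))) ω ∂μ := by
        simp_rw [← lhs_expand]
    _ = ∑' k : ℕ, ∫⁻ ω in A, (Z ⁻¹' {k}).indicator
          (fun _ => ENNReal.ofReal (Real.exp (t*k))) ω ∂μ :=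
        lintegral_tsum (fun k => (measurable_const.indicator
          (hZ (measurableSet_singleton k))).aemeasurable)
    _ = ∑' k : ℕ, ENNReal.ofReal (Real.exp (t*k)) * μ (A ∩ Z ⁻¹' {k}) := by
        congr 1; funext k
        rw [lintegral_indicator (hZ (measurableSet_singleton k))]
        rw [Measure.restrict_restrict (hZ (measurableSet_singleton k))]
        simp [Set.inter_comm]
    _ = ∑' k : ℕ, ∫⁻ ω in A, ENNReal.ofReal (Real.exp (t*k)) * ENNReal.ofReal (p k ω) ∂μ := by
        congr 1; funext k
        rw [step1 k, ← lintegral_const_mul _ (hpmeas k).ennreal_ofReal]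
    _ = ∫⁻ ω in A, ∑' k : ℕ, ENNReal.ofReal (Real.exp (t*k)) * ENNReal.ofReal (p k ω) ∂μ :=
        (lintegral_tsum (fun k => (measurable_const.mul
          (hpmeas k).ennreal_ofReal).aemeasurable)).symm
    _ = ∫⁻ ω in A, ENNReal.ofReal (Real.exp (g ω * (Real.exp t - 1))) ∂μ := by
        simp_rw [← rhs_expand]

lemma lintegral_mul_exp_eq {Ω : Type*} {mF : MeasurableSpace Ω} {mΩ : MeasurableSpace Ω}
    (hm : mF ≤ mΩ) (μ : Measure Ω) [IsProbabilityMeasure μ]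
    {Z : Ω → ℕ} (hZ : Measurable[mΩ] Z) {g : Ω → ℝ} (hg : Measurable[mF] g)
    (hg0 : ∀ ω, 0 ≤ g ω)
    (hcond : ∀ s : Set ℕ, MeasurableSet s → (μ⟦Z ⁻¹' s | mF⟧) =ᵐ[μ]
      fun ω => ((poissonMeasure (Real.toNNReal (g ω))) s).toReal)
    (t : ℝ) {W : Ω → ℝ≥0∞} (hW : Measurable[mF] W) :
    ∫⁻ ω, W ω * ENNReal.ofReal (Real.exp (t * Z ω)) ∂μ
      = ∫⁻ ω, W ω * ENNReal.ofReal (Real.exp (g ω * (Real.exp t - 1))) ∂μ := by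
  have hgm : Measurable[mΩ] g := hg.mono hm le_rfl
  have hZr : Measurable[mΩ] (fun ω => (Z ω : ℝ)) := measurable_from_top.comp hZ
  set f₁ : Ω → ℝ≥0∞ := fun ω => ENNReal.ofReal (Real.exp (t * Z ω)) with hf₁
  set f₂ : Ω → ℝ≥0∞ := fun ω => ENNReal.ofReal (Real.exp (g ω * (Real.exp t - 1))) with hf₂
  have hf₁m : Measurable[mΩ] f₁ := ((hZr.const_mul t).exp).ennreal_ofReal
  have hf₂m : Measurable[mΩ] f₂ := ((hgm.mul_const _).exp).ennreal_ofReal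
  have hWm : Measurable[mΩ] W := hW.mono hm le_rfl
  have htrim : (μ.withDensity f₁).trim hm = (μ.withDensity f₂).trim hm := by
    refine @Measure.ext Ω mF _ _ fun s hs => ?_
    rw [trim_measurableSet_eq hm hs, trim_measurableSet_eq hm hs,
      withDensity_apply _ (hm s hs), withDensity_apply _ (hm s hs)]
    exact setLintegral_exp_eq hm μ hZ hg hg0 hcond t hs
  calc ∫⁻ ω, W ω * f₁ ω ∂μ = ∫⁻ ω, (f₁ * W) ω ∂μ := by
        simp_rw [Pi.mul_apply, mul_comm]
    _ = ∫⁻ ω, W ω ∂(μ.withDensity f₁) :=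
        (lintegral_withDensity_eq_lintegral_mul μ hf₁m hWm).symm
    _ = ∫⁻ ω, W ω ∂((μ.withDensity f₁).trim hm) := (lintegral_trim hm hW).symm
    _ = ∫⁻ ω, W ω ∂((μ.withDensity f₂).trim hm) := by rw [htrim]
    _ = ∫⁻ ω, W ω ∂(μ.withDensity f₂) := lintegral_trim hm hW
    _ = ∫⁻ ω, (f₂ * W) ω ∂μ := lintegral_withDensity_eq_lintegral_mul μ hf₂m hWm
    _ = ∫⁻ ω, W ω * f₂ ω ∂μ := by simp_rw [Pi.mul_apply, mul_comm]

lemma chernoff_calc {v b η : ℝ} (hv : 0 ≤ v) (hb : 1 ≤ b) (hη : 0 < η) :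
    v * (Real.exp (η/(v + b*η)) - 1 - η/(v + b*η)) - (η/(v + b*η))*η
      ≤ -η^2/(2*v + 2*b*η) := by
  have hd : 0 < v + b*η := by nlinarith
  set d := v + b*η with hddef
  set t := η/d with htdef
  have ht0 : 0 < t := div_pos hη hd
  have hb0 : (0:ℝ) < b := lt_of_lt_of_le one_pos hb
  have h2d : 2*v + 2*b*η = 2*d := by rw [hddef]; ring
  have hfin : η^2/(2*d) - η^2/d = -η^2/(2*v+2*b*η) := by
    rw [h2d]
    field_simp
    ring
  have htη : t * η = η^2/d := by
    rw [htdef]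
    field_simp
  rcases eq_or_lt_of_le hv with hv0 | hv0
  · -- v = 0
    have hstep : v * (Real.exp t - 1 - t) = 0 := by rw [← hv0, zero_mul]
    have hd' : d = b*η := by rw [hddef, ← hv0, zero_add]
    have hpos : (0:ℝ) ≤ η^2/(2*d) := by positivity
    linarith
  · -- v > 0
    have hdm : 0 < d - η := by
      rw [hddef]
      nlinarith
    have ht1 : t < 1 := by
      rw [htdef, div_lt_one hd]
      linarith
    have hexp := exp_taylor2 ht0.le ht1
    have e3 : t^2/(2*(1-t)) = η^2/(2*d*(d-η)) := by
      rw [htdef, div_pow]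
      rw [show 1 - η/d = (d-η)/d by field_simp]
      have hdne : d ≠ 0 := ne_of_gt hd
      have hdmne : d - η ≠ 0 := ne_of_gt hdm
      field_simp
    have hvle : v ≤ d - η := by
      rw [hddef]
      nlinarith
    have hstep : v * (Real.exp t - 1 - t) ≤ η^2/(2*d) := by
      have h2 : v * (Real.exp t - 1 - t) ≤ v * (η^2/(2*d*(d-η))) := by
        rw [← e3]
        exact mul_le_mul_of_nonneg_left hexp hv
      refine h2.trans ?_
      rw [show v * (η^2/(2*d*(d-η))) = v*η^2/(2*d*(d-η)) by ring]
      rw [div_le_div_iff₀ (by positivity) (by positivity)]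
      nlinarith [mul_le_mul_of_nonneg_right hvle (by positivity : (0:ℝ) ≤ η^2*(2*d))]
    linarith

/-- Let M_n = Σ_{k=1}^n (Z_k − Λγ_k) where, conditionally on F_{k−1},
Z_k ~ Poisson(Λγ_k) with γ_k ∈ [0,1] F_{k−1}-measurable. Then for any η > 0,
P(M_n > η) ≤ exp(−η² / (2Λ Σ_{k=1}^n γ_k + 2 max{1,Λ} η)). -/
theorem stmt_2 {Ω : Type*} {mΩ : MeasurableSpace Ω} (μ : Measure Ω) [IsProbabilityMeasure μ]
    (F : Filtration ℕ mΩ) (Λ : ℝ) (hΛ : 0 ≤ Λ) (n : ℕ)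
    (Z : ℕ → Ω → ℕ) (γ : ℕ → Ω → ℝ) (G : ℝ)
    (hZmeas : ∀ k, Measurable[F k] (Z k))
    (hγmeas : ∀ k, 1 ≤ k → Measurable[F (k - 1)] (γ k))
    (hγ : ∀ k ω, 0 ≤ γ k ω ∧ γ k ω ≤ 1)
    -- conditionally on F_{k−1}, Z_k has a Poisson distribution with mean Λ γ_k
    (hcond : ∀ k, 1 ≤ k → k ≤ n → ∀ s : Set ℕ, MeasurableSet s →
      (μ⟦Z k ⁻¹' s | F (k - 1)⟧) =ᵐ[μ]
        fun ω => ((poissonMeasure (Real.toNNReal (Λ * γ k ω))) s).toReal)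
    -- Σ_{k=1}^n γ_k equals G (so the stated bound is well defined)
    (hG : ∀ᵐ ω ∂μ, (∑ k ∈ Finset.Icc 1 n, γ k ω) = G)
    (η : ℝ) (hη : 0 < η) :
    μ {ω | (∑ k ∈ Finset.Icc 1 n, ((Z k ω : ℝ) - Λ * γ k ω)) > η} ≤
      ENNReal.ofReal (Real.exp (-η ^ 2 / (2 * Λ * G + 2 * max 1 Λ * η))) := by
  have hGnn : 0 ≤ G := by
    obtain ⟨ω₀, hω₀⟩ := hG.exists
    rw [← hω₀]
    exact Finset.sum_nonneg fun k _ => (hγ k ω₀).1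
  set b := max 1 Λ with hbdef
  have hb1 : (1:ℝ) ≤ b := le_max_left _ _
  have hv : 0 ≤ Λ * G := mul_nonneg hΛ hGnn
  have hd : 0 < Λ * G + b * η := by nlinarith
  set t := η / (Λ * G + b * η) with htdef
  have ht0 : 0 < t := div_pos hη hd
  have hψ : 0 ≤ Real.exp t - 1 - t := by
    have := Real.add_one_le_exp t; linarith
  -- measurability of partial exponent sums
  have hsum_meas : ∀ m : ℕ, Measurable[F m] (fun ω => ∑ k ∈ Finset.Icc 1 m,
      (t * (Z k ω : ℝ) - Λ * γ k ω * (Real.exp t - 1))) := by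
    intro m
    apply Finset.measurable_sum
    intro k hk
    rw [Finset.mem_Icc] at hk
    have hZk : Measurable[F m] (fun ω => (Z k ω : ℝ)) :=
      (measurable_from_top.comp (hZmeas k)).mono (F.mono hk.2) le_rfl
    have hγk : Measurable[F m] (γ k) :=
      (hγmeas k hk.1).mono (F.mono (by omega : k - 1 ≤ m)) le_rfl
    exact (hZk.const_mul t).sub ((hγk.const_mul Λ).mul_const _)
  -- exponential supermartingale identity
  have key : ∀ m : ℕ, m ≤ n →
      ∫⁻ ω, ENNReal.ofReal (Real.exp (∑ k ∈ Finset.Icc 1 m,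
        (t * (Z k ω : ℝ) - Λ * γ k ω * (Real.exp t - 1)))) ∂μ = 1 := by
    intro m
    induction m with
    | zero =>
      intro _
      simp
    | succ m ih =>
      intro hmn
      have hγm1 : Measurable[F m] (γ (m+1)) := by
        have := hγmeas (m+1) (by omega)
        simpa using this
      have hg : Measurable[F m] (fun ω => Λ * γ (m+1) ω) := hγm1.const_mul Λ
      have hg0 : ∀ ω, 0 ≤ Λ * γ (m+1) ω := fun ω => mul_nonneg hΛ (hγ _ _).1
      have hcond' : ∀ s : Set ℕ, MeasurableSet s → (μ⟦Z (m+1) ⁻¹' s | F m⟧) =ᵐ[μ]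
          fun ω => ((poissonMeasure (Real.toNNReal (Λ * γ (m+1) ω))) s).toReal := by
        intro s hs
        have := hcond (m+1) (by omega) hmn s hs
        simpa using this
      set W : Ω → ℝ≥0∞ := fun ω => ENNReal.ofReal (Real.exp ((∑ k ∈ Finset.Icc 1 m,
        (t * (Z k ω : ℝ) - Λ * γ k ω * (Real.exp t - 1)))
          - Λ * γ (m+1) ω * (Real.exp t - 1))) with hWdef
      have hW : Measurable[F m] W :=
        (((hsum_meas m).sub ((hγm1.const_mul Λ).mul_const _)).exp).ennreal_ofReal
      have hZm1 : Measurable[mΩ] (Z (m+1)) := (hZmeas (m+1)).mono (F.le (m+1)) le_rfl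
      have happ := lintegral_mul_exp_eq (F.le m) μ hZm1 hg hg0 hcond' t hW
      have expand : ∀ ω, ENNReal.ofReal (Real.exp (∑ k ∈ Finset.Icc 1 (m+1),
          (t * (Z k ω : ℝ) - Λ * γ k ω * (Real.exp t - 1))))
          = W ω * ENNReal.ofReal (Real.exp (t * (Z (m+1) ω : ℝ))) := by
        intro ω
        rw [Finset.sum_Icc_succ_top (by omega : 1 ≤ m+1)]
        rw [show (∑ k ∈ Finset.Icc 1 m, (t * (Z k ω : ℝ) - Λ * γ k ω * (Real.exp t - 1)))
            + (t * (Z (m+1) ω : ℝ) - Λ * γ (m+1) ω * (Real.exp t - 1))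
          = ((∑ k ∈ Finset.Icc 1 m, (t * (Z k ω : ℝ) - Λ * γ k ω * (Real.exp t - 1)))
            - Λ * γ (m+1) ω * (Real.exp t - 1)) + t * (Z (m+1) ω : ℝ) by ring]
        rw [Real.exp_add, ENNReal.ofReal_mul (exp_nonneg _)]
      have combine : ∀ ω, W ω * ENNReal.ofReal (Real.exp ((Λ * γ (m+1) ω) * (Real.exp t - 1)))
          = ENNReal.ofReal (Real.exp (∑ k ∈ Finset.Icc 1 m,
            (t * (Z k ω : ℝ) - Λ * γ k ω * (Real.exp t - 1)))) := by
        intro ω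
        rw [hWdef, ← ENNReal.ofReal_mul (exp_nonneg _), ← Real.exp_add]
        congr 2
        ring
      calc ∫⁻ ω, ENNReal.ofReal (Real.exp (∑ k ∈ Finset.Icc 1 (m+1),
            (t * (Z k ω : ℝ) - Λ * γ k ω * (Real.exp t - 1)))) ∂μ
          = ∫⁻ ω, W ω * ENNReal.ofReal (Real.exp (t * (Z (m+1) ω : ℝ))) ∂μ := by
            simp_rw [expand]
        _ = ∫⁻ ω, W ω * ENNReal.ofReal (Real.exp ((Λ * γ (m+1) ω) * (Real.exp t - 1))) ∂μ := happ
        _ = ∫⁻ ω, ENNReal.ofReal (Real.exp (∑ k ∈ Finset.Icc 1 m,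
            (t * (Z k ω : ℝ) - Λ * γ k ω * (Real.exp t - 1)))) ∂μ := by
            simp_rw [combine]
        _ = 1 := ih (by omega)
  -- Markov / Chernoff step
  set fE : Ω → ℝ≥0∞ := fun ω => ENNReal.ofReal (Real.exp (∑ k ∈ Finset.Icc 1 n,
    (t * (Z k ω : ℝ) - Λ * γ k ω * (Real.exp t - 1)))) with hfEdef
  have hfEmeas : Measurable[mΩ] fE :=
    (((hsum_meas n).mono (F.le n) le_rfl).exp).ennreal_ofReal
  have hintf : ∫⁻ ω, fE ω ∂μ = 1 := key n le_rfl
  set c : ℝ≥0∞ := ENNReal.ofReal (Real.exp (t*η - Λ*G*(Real.exp t - 1 - t))) with hcdef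
  have hsub : {ω | (∑ k ∈ Finset.Icc 1 n, ((Z k ω : ℝ) - Λ * γ k ω)) > η}
      ≤ᵐ[μ] {ω | c ≤ fE ω} := by
    filter_upwards [hG] with ω hωG hωM
    have hωM' : (∑ k ∈ Finset.Icc 1 n, ((Z k ω : ℝ) - Λ * γ k ω)) > η := hωM
    show c ≤ fE ω
    refine ENNReal.ofReal_le_ofReal (Real.exp_le_exp.mpr ?_)
    have hrw : (∑ k ∈ Finset.Icc 1 n, (t * (Z k ω : ℝ) - Λ * γ k ω * (Real.exp t - 1)))
        = t * (∑ k ∈ Finset.Icc 1 n, ((Z k ω : ℝ) - Λ * γ k ω))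
          - Λ * (∑ k ∈ Finset.Icc 1 n, γ k ω) * (Real.exp t - 1 - t) := by
      rw [Finset.mul_sum, Finset.mul_sum, Finset.sum_mul, ← Finset.sum_sub_distrib]
      exact Finset.sum_congr rfl fun k _ => by ring
    rw [hrw, hωG]
    have h1 : t * η ≤ t * (∑ k ∈ Finset.Icc 1 n, ((Z k ω : ℝ) - Λ * γ k ω)) :=
      mul_le_mul_of_nonneg_left hωM'.le ht0.le
    linarith
  have hc0 : c ≠ 0 := by
    rw [hcdef]
    simp [Real.exp_pos]
  calc μ {ω | (∑ k ∈ Finset.Icc 1 n, ((Z k ω : ℝ) - Λ * γ k ω)) > η}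
      ≤ μ {ω | c ≤ fE ω} := measure_mono_ae hsub
    _ ≤ c⁻¹ := by
        have hM := mul_meas_ge_le_lintegral₀ (μ := μ) hfEmeas.aemeasurable c
        rw [hintf] at hM
        exact ENNReal.le_inv_iff_mul_le.mpr (by rwa [mul_comm])
    _ = ENNReal.ofReal (Real.exp (Λ*G*(Real.exp t - 1 - t) - t*η)) := by
        rw [hcdef, ← ENNReal.ofReal_inv_of_pos (Real.exp_pos _), ← Real.exp_neg]
        ring_nf
    _ ≤ ENNReal.ofReal (Real.exp (-η ^ 2 / (2 * Λ * G + 2 * max 1 Λ * η))) := by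
        refine ENNReal.ofReal_le_ofReal (Real.exp_le_exp.mpr ?_)
        have := chernoff_calc hv hb1 hη
        calc Λ*G*(Real.exp t - 1 - t) - t*η
            = Λ*G * (Real.exp (η/(Λ*G + b*η)) - 1 - η/(Λ*G + b*η)) - (η/(Λ*G + b*η))*η := by
              rw [htdef]
          _ ≤ -η^2/(2*(Λ*G) + 2*b*η) := this
          _ = -η ^ 2 / (2 * Λ * G + 2 * max 1 Λ * η) := by rw [hbdef]; ring_nf
end

section
/- Let m, λ_max, γ_min > 0, T ≥ 2, ℓ > 0, and suppose G := Σᵢ γ(b_{τᵢ}) satisfies mℓ ≤ 6 max{1,λ_max} log(T)/G + sqrt(6 λ_max log(T)/G). Then G ≤ 12 max{1,λ_max} log(T)/(mℓ) + 6 λ_max log(T)/(m²ℓ²), and hence the number of terms |V| satisfies |V| ≤ (12 max{1,λ_max} log(T)/(mℓ) + 6 λ_max log(T)/(m²ℓ²))/γ_min whenever each γ(b_{τᵢ}) ≥ γ_min. -/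
/-- If G = Σ_{i<V} γᵢ with γ_min ≤ γᵢ ≤ 1 satisfies
mℓ ≤ 6 max{1,λ_max} log(T)/G + sqrt(6 λ_max log(T)/G), then
G ≤ 12 max{1,λ_max} log(T)/(mℓ) + 6 λ_max log(T)/(m²ℓ²), and
V ≤ (12 max{1,λ_max} log(T)/(mℓ) + 6 λ_max log(T)/(m²ℓ²))/γ_min. -/
theorem stmt_9 (m lamMax T ℓ γmin : ℝ) (V : ℕ) (g : ℕ → ℝ)
    (hm : 0 < m) (hlam : 0 < lamMax) (hγmin : 0 < γmin) (hT : 2 ≤ T) (hℓ : 0 < ℓ)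
    (hg : ∀ i < V, γmin ≤ g i ∧ g i ≤ 1)
    (hGpos : 0 < ∑ i ∈ Finset.range V, g i)
    (hdiv : m * ℓ ≤ 6 * max 1 lamMax * Real.log T / (∑ i ∈ Finset.range V, g i) +
      Real.sqrt (6 * lamMax * Real.log T / (∑ i ∈ Finset.range V, g i))) :
    (∑ i ∈ Finset.range V, g i) ≤
        12 * max 1 lamMax * Real.log T / (m * ℓ) + 6 * lamMax * Real.log T / (m ^ 2 * ℓ ^ 2) ∧
    (V : ℝ) ≤ (12 * max 1 lamMax * Real.log T / (m * ℓ) +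
        6 * lamMax * Real.log T / (m ^ 2 * ℓ ^ 2)) / γmin := by
  set G := ∑ i ∈ Finset.range V, g i with hG
  have hlog : 0 < Real.log T := Real.log_pos (by linarith)
  set A : ℝ := 6 * max 1 lamMax * Real.log T with hA
  set B : ℝ := 6 * lamMax * Real.log T with hB
  have hApos : 0 < A := by
    have : (1:ℝ) ≤ max 1 lamMax := le_max_left _ _
    positivity
  have hBpos : 0 < B := by positivity
  set c : ℝ := m * ℓ with hc
  have hcpos : 0 < c := by positivity
  set s : ℝ := Real.sqrt (B * G) with hs
  have hsnn : 0 ≤ s := Real.sqrt_nonneg _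
  have hssq : s ^ 2 = B * G := by
    rw [hs, Real.sq_sqrt (by positivity)]
  have hmain : c * G ≤ A + s := by
    have h1 : c * G ≤ A + G * Real.sqrt (B / G) := by
      have := mul_le_mul_of_nonneg_left hdiv hGpos.le
      calc c * G = G * (m * ℓ) := by ring
        _ ≤ G * (A / G + Real.sqrt (B / G)) := this
        _ = A + G * Real.sqrt (B / G) := by
            rw [mul_add]
            congr 1
            field_simp
    have h2 : G * Real.sqrt (B / G) = s := by
      rw [hs, show B * G = (B / G) * G ^ 2 by field_simp,
        Real.sqrt_mul (by positivity), Real.sqrt_sq hGpos.le]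
      ring
    rwa [h2] at h1
  -- key bound: c^2 * G ≤ 2*A*c + B
  have hkey : c ^ 2 * G ≤ 2 * A * c + B := by
    rcases le_or_gt (c * G) A with h | h
    · nlinarith
    · have h3 : (c * G - A) ^ 2 ≤ s ^ 2 := by nlinarith
      rw [hssq] at h3
      nlinarith [sq_nonneg A, mul_pos hcpos hGpos]
  have hGle : G ≤ 12 * max 1 lamMax * Real.log T / (m * ℓ) +
      6 * lamMax * Real.log T / (m ^ 2 * ℓ ^ 2) := by
    have heq : 12 * max 1 lamMax * Real.log T / (m * ℓ) +
        6 * lamMax * Real.log T / (m ^ 2 * ℓ ^ 2) = (2 * A * c + B) / c ^ 2 := by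
      rw [hA, hB, hc]
      field_simp
      ring
    rw [heq, le_div_iff₀ (by positivity)]
    nlinarith
  refine ⟨hGle, ?_⟩
  have hVG : (V : ℝ) * γmin ≤ G := by
    rw [hG]
    calc (V : ℝ) * γmin = ∑ _i ∈ Finset.range V, γmin := by
          rw [Finset.sum_const, Finset.card_range, nsmul_eq_mul]
      _ ≤ ∑ i ∈ Finset.range V, g i :=
          Finset.sum_le_sum fun i hi => (hg i (Finset.mem_range.mp hi)).1
  rw [le_div_iff₀ hγmin]
  linarith
end

section
/- For all x > 0 and 0 < a < 1, the inequality 2ax + 2a² log(a/(a+x)) ≤ x² holds. -/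
lemma log_quad_bound (t : ℝ) (ht : 0 ≤ t) : t - t ^ 2 / 2 ≤ Real.log (1 + t) := by
  set g : ℝ → ℝ := fun s => Real.log (1 + s) - s + s ^ 2 / 2 with hg
  have hderiv : ∀ s ∈ Set.Ici (0:ℝ), HasDerivAt g (1 / (1 + s) - 1 + s) s := by
    intro s hs
    have hs0 : (0:ℝ) ≤ s := hs
    have h1 : (0:ℝ) < 1 + s := by linarith
    have hlog : HasDerivAt (fun s : ℝ => Real.log (1 + s)) (1 / (1 + s)) s := by
      have := (Real.hasDerivAt_log (ne_of_gt h1)).comp s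
        ((hasDerivAt_id s).const_add 1)
      simpa [one_div, Function.comp_def] using this
    have hsq : HasDerivAt (fun s : ℝ => s ^ 2 / 2) s s := by
      have := ((hasDerivAt_pow 2 s).div_const 2)
      simpa using this
    have h := (hlog.sub (hasDerivAt_id s)).add hsq
    exact h
  have hmono : MonotoneOn g (Set.Ici 0) := by
    apply monotoneOn_of_deriv_nonneg (convex_Ici 0)
    · exact fun s hs => (hderiv s hs).continuousAt.continuousWithinAt
    · intro s hs
      rw [interior_Ici] at hs
      exact ((hderiv s (Set.mem_Ici.mpr (le_of_lt hs))).differentiableAt).differentiableWithinAt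
    · intro s hs
      rw [interior_Ici] at hs
      have hs0 : (0:ℝ) < s := hs
      rw [(hderiv s (le_of_lt hs0)).deriv]
      have h1 : (0:ℝ) < 1 + s := by linarith
      rw [div_sub' (ne_of_gt h1), div_add' _ _ _ (ne_of_gt h1)]
      apply div_nonneg _ (le_of_lt h1)
      nlinarith
  have h0 : g 0 ≤ g t := hmono (Set.self_mem_Ici) ht ht
  simp [hg] at h0
  linarith

/-- For all x > 0 and 0 < a < 1,
2ax + 2a² log(a/(a+x)) ≤ x². -/
theorem stmt_12 (a x : ℝ) (ha : 0 < a) (ha1 : a < 1) (hx : 0 < x) :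
    2 * a * x + 2 * a ^ 2 * Real.log (a / (a + x)) ≤ x ^ 2 := by
  have hax : 0 < a + x := by linarith
  have ht : (0:ℝ) ≤ x / a := le_of_lt (div_pos hx ha)
  have key := log_quad_bound (x / a) ht
  have hlog : Real.log (a / (a + x)) = - Real.log (1 + x / a) := by
    rw [← Real.log_inv]
    congr 1
    field_simp
  rw [hlog]
  have h2 : x / a - (x / a) ^ 2 / 2 ≤ Real.log (1 + x / a) := key
  have hmul := mul_le_mul_of_nonneg_left h2 (by positivity : (0:ℝ) ≤ 2 * a ^ 2)
  have heq : 2 * a ^ 2 * (x / a - (x / a) ^ 2 / 2) = 2 * a * x - x ^ 2 := by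
    field_simp
  rw [heq] at hmul
  linarith
end

section
/- Fix m > 0, ε ∈ (0, 1/2], x* ∈ [ε, 1−ε], and γ: [0,1] → (0,1] differentiable, nonincreasing, with −γ′(x) ≥ γ(x). Define Λ(x) = (1/γ(x))·mε(1 + ε − |x − x*|) for |x − x*| ≤ ε and Λ(x) = (1/γ(x))·min(mx, mε) otherwise. Then Λ is nondecreasing on [0,1]. -/
/-- Glue monotonicity on two adjacent closed intervals. -/
lemma monotoneOn_glue {f : ℝ → ℝ} {a b c : ℝ} (hab : a ≤ b) (hbc : b ≤ c)
    (h1 : MonotoneOn f (Set.Icc a b)) (h2 : MonotoneOn f (Set.Icc b c)) :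
    MonotoneOn f (Set.Icc a c) := by
  intro x hx y hy hxy
  rcases le_total y b with hyb | hby
  · exact h1 ⟨hx.1, hxy.trans hyb⟩ ⟨hy.1, hyb⟩ hxy
  · rcases le_total x b with hxb | hbx
    · calc f x ≤ f b := h1 ⟨hx.1, hxb⟩ ⟨hab, le_rfl⟩ hxb
        _ ≤ f y := h2 ⟨le_rfl, hbc⟩ ⟨hby, hy.2⟩ hby
    · exact h2 ⟨hbx, hx.2⟩ ⟨hbx.trans hxy, hy.2⟩ hxy

/-- With m > 0, ε ∈ (0,1/2], x* ∈ [ε, 1−ε], γ : [0,1] → (0,1]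
differentiable, nonincreasing, with −γ′ ≥ γ, the CIF
Λ(x) = (1/γ(x))·mε(1+ε−|x−x*|) for |x−x*| ≤ ε and (1/γ(x))·min(mx, mε) otherwise
is nondecreasing on [0,1]. -/
theorem stmt_17 (m ε xstar : ℝ) (γ : ℝ → ℝ) (γ' : ℝ → ℝ)
    (hm : 0 < m) (hε : 0 < ε ∧ ε ≤ 1/2) (hx : ε ≤ xstar ∧ xstar ≤ 1 - ε)
    (hdiff : ∀ x ∈ Set.Icc (0:ℝ) 1, HasDerivWithinAt γ (γ' x) (Set.Icc 0 1) x)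
    (hpos : ∀ x ∈ Set.Icc (0:ℝ) 1, 0 < γ x ∧ γ x ≤ 1)
    (hmono : AntitoneOn γ (Set.Icc 0 1))
    (hcond : ∀ x ∈ Set.Icc (0:ℝ) 1, -γ' x ≥ γ x) :
    MonotoneOn (fun x =>
      if |x - xstar| ≤ ε then (1 / γ x) * (m * ε * (1 + ε - |x - xstar|))
      else (1 / γ x) * min (m * x) (m * ε)) (Set.Icc 0 1) := by
  obtain ⟨hε0, hε2⟩ := hε
  obtain ⟨hx1, hx2⟩ := hx
  set Λ : ℝ → ℝ := fun x =>
      if |x - xstar| ≤ ε then (1 / γ x) * (m * ε * (1 + ε - |x - xstar|))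
      else (1 / γ x) * min (m * x) (m * ε) with hΛ
  -- 1/γ is nondecreasing on [0,1]
  have hinv : MonotoneOn (fun x => 1 / γ x) (Set.Icc 0 1) := by
    intro a ha b hb hab
    exact one_div_le_one_div_of_le (hpos b hb).1 (hmono ha hb hab)
  have hinvnn : ∀ x ∈ Set.Icc (0:ℝ) 1, 0 ≤ 1 / γ x := fun x hxm =>
    le_of_lt (one_div_pos.2 (hpos x hxm).1)
  have hmemA : ∀ z ∈ Set.Icc (0:ℝ) xstar, z ∈ Set.Icc (0:ℝ) 1 :=
    fun z hz => ⟨hz.1, hz.2.trans (by linarith)⟩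
  have hmemB : ∀ z ∈ Set.Icc xstar (xstar + ε), z ∈ Set.Icc (0:ℝ) 1 :=
    fun z hz => ⟨le_trans (by linarith) hz.1, hz.2.trans (by linarith)⟩
  have hmemC : ∀ z ∈ Set.Icc (xstar + ε) (1:ℝ), z ∈ Set.Icc (0:ℝ) 1 :=
    fun z hz => ⟨le_trans (by linarith) hz.1, hz.2⟩
  -- Piece A: [0, xstar]
  have pieceA : MonotoneOn Λ (Set.Icc 0 xstar) := by
    intro a ha b hb hab
    have ha1 := hmemA a ha
    have hb1 := hmemA b hb
    have habsa : |a - xstar| = xstar - a := by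
      rw [abs_sub_comm]; exact abs_of_nonneg (by linarith [ha.2])
    have habsb : |b - xstar| = xstar - b := by
      rw [abs_sub_comm]; exact abs_of_nonneg (by linarith [hb.2])
    -- the "reward" part
    set νa : ℝ := if |a - xstar| ≤ ε then m * ε * (1 + ε - |a - xstar|)
      else min (m * a) (m * ε) with hνa
    set νb : ℝ := if |b - xstar| ≤ ε then m * ε * (1 + ε - |b - xstar|)
      else min (m * b) (m * ε) with hνb
    have hΛa : Λ a = (1 / γ a) * νa := by
      simp only [hΛ, hνa]; split_ifs <;> rfl
    have hΛb : Λ b = (1 / γ b) * νb := by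
      simp only [hΛ, hνb]; split_ifs <;> rfl
    have hme : (0:ℝ) ≤ m * ε := by positivity
    have hνann : 0 ≤ νa := by
      rw [hνa, habsa]
      split_ifs with h
      · nlinarith [mul_le_mul_of_nonneg_left
          (show (1:ℝ) ≤ 1 + ε - (xstar - a) by linarith) hme]
      · exact le_min (mul_nonneg hm.le ha.1) hme
    have hνab : νa ≤ νb := by
      rw [hνa, hνb, habsa, habsb]
      split_ifs with h1 h2 h2
      · exact mul_le_mul_of_nonneg_left (by linarith) hme
      · exfalso; exact h2 (by linarith)
      · calc min (m * a) (m * ε) ≤ m * ε := min_le_right _ _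
          _ ≤ m * ε * (1 + ε - (xstar - b)) := by
            nlinarith [mul_le_mul_of_nonneg_left
              (show (1:ℝ) ≤ 1 + ε - (xstar - b) by linarith) hme]
      · exact min_le_min (mul_le_mul_of_nonneg_left hab hm.le) le_rfl
    rw [hΛa, hΛb]
    exact mul_le_mul (hinv ha1 hb1 hab) hνab hνann (hinvnn b hb1)
  -- Piece C: [xstar+ε, 1]
  have eqC : ∀ z ∈ Set.Icc (xstar + ε) (1:ℝ), Λ z = (1 / γ z) * (m * ε) := by
    intro z hz
    simp only [hΛ]
    rw [abs_of_nonneg (by linarith [hz.1])]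
    split_ifs with h
    · have hze : z - xstar = ε := le_antisymm h (by linarith [hz.1])
      rw [hze]; ring_nf
    · rw [min_eq_right (by nlinarith [hz.1])]
  have pieceC : MonotoneOn Λ (Set.Icc (xstar + ε) 1) := by
    intro a ha b hb hab
    rw [eqC a ha, eqC b hb]
    exact mul_le_mul_of_nonneg_right (hinv (hmemC a ha) (hmemC b hb) hab) (by positivity)
  -- Piece B: [xstar, xstar+ε] via derivative
  have pieceB : MonotoneOn Λ (Set.Icc xstar (xstar + ε)) := by
    set F : ℝ → ℝ := fun x => m * ε * (1 + ε + xstar - x) / γ x with hF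
    have eqB : ∀ z ∈ Set.Icc xstar (xstar + ε), Λ z = F z := by
      intro z hz
      have habs : |z - xstar| = z - xstar := abs_of_nonneg (by linarith [hz.1])
      simp only [hΛ, hF, habs]
      rw [if_pos (by linarith [hz.2])]
      have hgz : γ z ≠ 0 := ne_of_gt (hpos z (hmemB z hz)).1
      field_simp
      ring
    have hsubB : Set.Icc xstar (xstar + ε) ⊆ Set.Icc (0:ℝ) 1 := fun z hz => hmemB z hz
    have hγcont : ContinuousOn γ (Set.Icc xstar (xstar + ε)) :=
      fun z hz => ((hdiff z (hsubB hz)).continuousWithinAt).mono hsubB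
    have hFmono : MonotoneOn F (Set.Icc xstar (xstar + ε)) := by
      apply monotoneOn_of_hasDerivWithinAt_nonneg (f' := fun x =>
        ((-(m * ε)) * γ x - m * ε * (1 + ε + xstar - x) * γ' x) / (γ x) ^ 2)
        (convex_Icc _ _)
      · exact (continuousOn_const.mul (continuousOn_const.sub continuousOn_id)).div hγcont
          (fun z hz => ne_of_gt (hpos z (hsubB hz)).1)
      · intro x hxm
        rw [interior_Icc] at hxm
        have hx01 : x ∈ Set.Icc (0:ℝ) 1 := hsubB (Set.Ioo_subset_Icc_self hxm)
        have hu : HasDerivWithinAt (fun x : ℝ => m * ε * (1 + ε + xstar - x))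
            (-(m * ε)) (Set.Ioo xstar (xstar + ε)) x := by
          have := (((hasDerivAt_id x).const_sub (1 + ε + xstar)).const_mul
            (m * ε)).hasDerivWithinAt (s := Set.Ioo xstar (xstar + ε))
          simpa using this
        have hγd : HasDerivWithinAt γ (γ' x) (Set.Ioo xstar (xstar + ε)) x :=
          (hdiff x hx01).mono (fun z hz => hsubB (Set.Ioo_subset_Icc_self hz))
        rw [interior_Icc]
        exact hu.div hγd (ne_of_gt (hpos x hx01).1)
      · intro x hxm
        rw [interior_Icc] at hxm
        have hx01 : x ∈ Set.Icc (0:ℝ) 1 := hsubB (Set.Ioo_subset_Icc_self hxm)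
        have hg := (hpos x hx01).1
        have hc : (1:ℝ) ≤ 1 + ε + xstar - x := by linarith [hxm.2]
        have h1 : γ x ≤ -γ' x := hcond x hx01
        have key : (1 + ε + xstar - x) * γ x ≤ (1 + ε + xstar - x) * (-γ' x) :=
          mul_le_mul_of_nonneg_left h1 (by linarith)
        have h2 : γ x ≤ (1 + ε + xstar - x) * (-γ' x) := by
          nlinarith [mul_nonneg (show (0:ℝ) ≤ 1 + ε + xstar - x - 1 by linarith) hg.le]
        apply div_nonneg _ (sq_nonneg _)
        nlinarith [mul_le_mul_of_nonneg_left h2 (show (0:ℝ) ≤ m * ε by positivity)]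
    exact fun a ha b hb hab => by rw [eqB a ha, eqB b hb]; exact hFmono ha hb hab
  -- Glue
  have h01 : (0:ℝ) ≤ xstar := le_trans hε0.le hx1
  have hAB : MonotoneOn Λ (Set.Icc 0 (xstar + ε)) :=
    monotoneOn_glue h01 (by linarith) pieceA pieceB
  exact monotoneOn_glue (by linarith) (by linarith) hAB pieceC
end
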